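/- For k ≥ 2, let F = P_k ∪ (k+1)·K_1 (a path on k vertices plus k+1 isolated vertices) and G = C_{k+1} ∪ k·K_1 (a cycle on k+1 vertices plus k isolated vertices), both on n = 2k+1 vertices. Then F and G have at least ⌊n/2⌋ + 1 = k + 1 common cards; indeed deleting any vertex of the cycle of G yields P_k ∪ k·K_1, which equals F minus any of its k+1 isolated vertices. -/
import Mathlib


open SimpleGraph

/-- The vertex-deleted subgraph `G - v`: the induced subgraph on the remaining vertices. -/
def deleteVert {V : Type*} (G : SimpleGraph V) (v : V) : SimpleGraph {w : V // w ≠ v} :=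
  G.induce {w : V | w ≠ v}

/-- `G` contains a cycle. -/
def HasCycleG {V : Type*} (G : SimpleGraph V) : Prop :=
  ∃ (u : V) (c : G.Walk u u), c.IsCycle

/-- `G` contains at least two distinct cycles (distinct as subgraphs,
i.e. with different edge sets). -/
def TwoCycles {V : Type*} (G : SimpleGraph V) : Prop :=
  ∃ (u v : V) (c : G.Walk u u) (c' : G.Walk v v),
    c.IsCycle ∧ c'.IsCycle ∧ ¬ (∀ e, e ∈ c.edges ↔ e ∈ c'.edges)

/-- `G` contains exactly one cycle: it has a cycle, and any two cycles are equal
as subgraphs (have the same edge set). -/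
def Unicyclic {V : Type*} (G : SimpleGraph V) : Prop :=
  HasCycleG G ∧ ∀ (u v : V) (c : G.Walk u u) (c' : G.Walk v v),
    c.IsCycle → c'.IsCycle → ∀ e, e ∈ c.edges ↔ e ∈ c'.edges

/-- `F` and `G` have at least `k` common cards, i.e. the multiset intersection of their
decks has size at least `k`: there are `k` distinct vertices of `F` and `k` distinct
vertices of `G` whose corresponding vertex-deleted subgraphs are pairwise isomorphic. -/
def CommonCards {V W : Type*} (F : SimpleGraph V) (G : SimpleGraph W) (k : ℕ) : Prop :=
  ∃ (f : Fin k ↪ V) (g : Fin k ↪ W),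
    ∀ i, Nonempty (deleteVert F (f i) ≃g deleteVert G (g i))

/-- For `k ≥ 2`, the forest `F = P_k ∪ (k+1)·K_1` and the unicyclic graph
`G = C_{k+1} ∪ k·K_1`, both on `n = 2k+1` vertices, have at least `⌊n/2⌋ + 1 = k + 1`
common cards. -/
-- transport of deleteVert along an iso
def delVertIso {V W : Type*} {G : SimpleGraph V} {H : SimpleGraph W} (e : G ≃g H)
    (v : V) (w : W) (h : e v = w) : deleteVert G v ≃g deleteVert H w where
  toEquiv := e.toEquiv.subtypeEquiv (fun x => by
    subst h; exact not_congr (e.toEquiv.injective.eq_iff (b := v)).symm)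
  map_rel_iff' := by
    rintro ⟨a, _⟩ ⟨b, _⟩
    simp [deleteVert, comap_adj, e.map_rel_iff]

-- sum of isos
def sumIso {α β γ δ : Type*} {G : SimpleGraph α} {G' : SimpleGraph β} {H : SimpleGraph γ}
    {H' : SimpleGraph δ} (e1 : G ≃g G') (e2 : H ≃g H') : G ⊕g H ≃g G' ⊕g H' where
  toEquiv := Equiv.sumCongr e1.toEquiv e2.toEquiv
  map_rel_iff' := by rintro (a|a) (b|b) <;> simp [e1.map_rel_iff, e2.map_rel_iff]

-- bot iso from any equiv
def botIso {α β : Type*} (e : α ≃ β) : (⊥ : SimpleGraph α) ≃g (⊥ : SimpleGraph β) where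
  toEquiv := e
  map_rel_iff' := by simp

-- rotation of cycle
def cycleRot (n : ℕ) (c : Fin (n + 1)) : cycleGraph (n + 1) ≃g cycleGraph (n + 1) where
  toEquiv := Equiv.addRight c
  map_rel_iff' := by
    intro u v
    simp [cycleGraph_adj', add_sub_add_right_eq_sub]

lemma key {n : ℕ} (a b : Fin (n + 1)) (ha : a ≠ 0) (hb : b ≠ 0) :
    (a - b).val = 1 ↔ a.val = b.val + 1 := by
  have ha' : a.val ≠ 0 := fun h => ha (Fin.ext h)
  have hb' : b.val ≠ 0 := fun h => hb (Fin.ext h)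
  have haa := a.isLt; have hbb := b.isLt
  rw [Fin.sub_def]
  simp only
  rcases Nat.lt_or_ge ((n + 1) - b.val + a.val) (n + 1) with h | h
  · rw [Nat.mod_eq_of_lt h]; omega
  · rw [Nat.mod_eq_sub_mod h, Nat.mod_eq_of_lt (by omega)]; omega

def coreEquiv (k : ℕ) : {w : Fin k ⊕ Fin (k + 1) // w ≠ Sum.inr 0} ≃
    {w : Fin (k + 1) ⊕ Fin k // w ≠ Sum.inl 0} where
  toFun w := match w with
    | ⟨Sum.inl p, _⟩ => ⟨Sum.inl p.succ, by simp [Fin.succ_ne_zero]⟩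
    | ⟨Sum.inr q, hq⟩ => ⟨Sum.inr ((q : Fin (k + 1)).pred (by simpa using hq)), by simp⟩
  invFun w := match w with
    | ⟨Sum.inl u, hu⟩ => ⟨Sum.inl (u.pred (by simpa using hu)), by simp⟩
    | ⟨Sum.inr r, _⟩ => ⟨Sum.inr r.succ, by simp [Fin.succ_ne_zero]⟩
  left_inv w := by
    rcases w with ⟨(p | q), hw⟩ <;> simp
  right_inv w := by
    rcases w with ⟨(u | r), hw⟩ <;> simp

def coreIso (k : ℕ) :
    deleteVert (pathGraph k ⊕g (⊥ : SimpleGraph (Fin (k + 1)))) (Sum.inr 0) ≃g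
    deleteVert (cycleGraph (k + 1) ⊕g (⊥ : SimpleGraph (Fin k))) (Sum.inl 0) where
  toEquiv := coreEquiv k
  map_rel_iff' := by
    rintro ⟨(p | q), ha⟩ ⟨(r | s), hb⟩ <;>
      simp [deleteVert, coreEquiv, comap_adj, pathGraph_adj, cycleGraph_adj']
    rw [key _ _ (Fin.succ_ne_zero p) (Fin.succ_ne_zero r),
        key _ _ (Fin.succ_ne_zero r) (Fin.succ_ne_zero p)]
    simp [Fin.val_succ]
    omega

theorem stmt13 (k : ℕ) (hk : 2 ≤ k) :
    CommonCards (pathGraph k ⊕g (⊥ : SimpleGraph (Fin (k + 1))))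
      (cycleGraph (k + 1) ⊕g (⊥ : SimpleGraph (Fin k))) (k + 1) := by
  refine ⟨⟨fun i => Sum.inr i, fun a b h => by simpa using h⟩,
    ⟨fun i => Sum.inl i, fun a b h => by simpa using h⟩, fun i => ?_⟩
  refine ⟨((delVertIso (sumIso (Iso.refl : pathGraph k ≃g pathGraph k) (botIso (Equiv.swap i 0))) (Sum.inr i) (Sum.inr 0)
      (by simp [sumIso, botIso])).trans (coreIso k)).trans
    (delVertIso (sumIso (cycleRot k i) (Iso.refl : (⊥ : SimpleGraph (Fin k)) ≃g ⊥)) (Sum.inl 0) (Sum.inl i) (by simp [sumIso, cycleRot]))⟩
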